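/- Let f be a piecewise contracting interval map on X satisfying the separation property. Then for every n ≥ 1, an atom of generation n determines its code: if A_{i_1…i_n}, A_{j_1…j_n} ∈ 𝒜_n satisfy A_{i_1…i_n} = A_{j_1…j_n}, then (i_1,…,i_n) = (j_1,…,j_n). -/

import Mathlib

open Set Filter Metric Topology

/-- A piecewise contracting interval map (PCIM) on the compact interval `X = [a,b]`:
there are `N ≥ 1` pairwise disjoint nonempty open (relative to `X`) subintervals
whose closures cover `X`, and `f` contracts with rate `lam ∈ (0,1)` on each piece. -/
structure PCIM where
  a : ℝ
  b : ℝ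
  hab : a < b
  N : ℕ
  hN : 1 ≤ N
  f : ℝ → ℝ
  lam : ℝ
  hlam₀ : 0 < lam
  hlam₁ : lam < 1
  piece : Fin N → Set ℝ
  piece_nonempty : ∀ i, (piece i).Nonempty
  piece_interval : ∀ i, ∃ c d : ℝ, piece i = Set.Ioo c d ∩ Set.Icc a b
  piece_disjoint : ∀ i j, i ≠ j → Disjoint (piece i) (piece j)
  cover : Set.Icc a b = ⋃ i, closure (piece i)
  mapsTo : Set.MapsTo f (Set.Icc a b) (Set.Icc a b)
  contract : ∀ i, ∀ x ∈ piece i, ∀ y ∈ piece i, |f x - f y| ≤ lam * |x - y|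

namespace PCIM

variable (P : PCIM)

/-- The underlying compact interval `X`. -/
def X : Set ℝ := Set.Icc P.a P.b

/-- `X* = ⋃ i, X_i`, the union of the contraction pieces. -/
def Xstar : Set ℝ := ⋃ i, P.piece i

/-- `Δ = X \ X*`, the set of boundaries of the contraction pieces. -/
def Delta : Set ℝ := P.X \ P.Xstar

/-- `X̃ = ⋂_{j ≥ 0} f⁻ʲ(X*)`, the points all of whose iterates are well defined. -/
def Xtilde : Set ℝ := ⋂ j : ℕ, (P.f^[j]) ⁻¹' P.Xstar

/-- `D`: the set of one-sided limits of `f` at the points of `Δ`. -/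
def D : Set ℝ :=
  {L | ∃ c ∈ P.Delta,
    ((𝓝[P.X ∩ Set.Iio c] c).NeBot ∧ Filter.Tendsto P.f (𝓝[P.X ∩ Set.Iio c] c) (𝓝 L)) ∨
    ((𝓝[P.X ∩ Set.Ioi c] c).NeBot ∧ Filter.Tendsto P.f (𝓝[P.X ∩ Set.Ioi c] c) (𝓝 L))}

/-- A set `A` is `f`-pseudo-invariant if for every `x ∈ A` at least one of the
one-sided limits of `f` at `x` belongs to `A`. -/
def PseudoInvariant (A : Set ℝ) : Prop :=
  ∀ x ∈ A,
    (∃ L ∈ A, (𝓝[P.X ∩ Set.Iio x] x).NeBot ∧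
      Filter.Tendsto P.f (𝓝[P.X ∩ Set.Iio x] x) (𝓝 L)) ∨
    (∃ L ∈ A, (𝓝[P.X ∩ Set.Ioi x] x).NeBot ∧
      Filter.Tendsto P.f (𝓝[P.X ∩ Set.Ioi x] x) (𝓝 L))

/-- `f` is piecewise monotonic: strictly monotone on each contraction piece. -/
def PiecewiseMonotonic : Prop :=
  ∀ i, StrictMonoOn P.f (P.piece i) ∨ StrictAntiOn P.f (P.piece i)

/-- `f` satisfies the separation property: it is piecewise monotonic and the closures
of the images of distinct pieces are disjoint. -/
def SeparationProperty : Prop :=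
  P.PiecewiseMonotonic ∧
    ∀ i j, i ≠ j → closure (P.f '' P.piece i) ∩ closure (P.f '' P.piece j) = ∅

/-- The iterates `Λ_n` defining the attractor: `Λ_0 = X`,
`Λ_{n+1} = cl (f (Λ_n \ Δ))`. -/
def LambdaIter : (P : PCIM) → ℕ → Set ℝ
  | Q, 0 => Q.X
  | Q, n + 1 => closure (Q.f '' (LambdaIter Q n \ Q.Delta))

/-- The attractor `Λ = ⋂_{n ≥ 1} Λ_n`. -/
def Lambda : Set ℝ := ⋂ n : ℕ, P.LambdaIter (n + 1)

/-- The atom associated to the word `w = [i₁, …, iₙ]`: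
`A_{i₁…iₙ} = F_{iₙ} ∘ ⋯ ∘ F_{i₁}(X)` where `F_i(A) = cl (f (A ∩ X_i))`. -/
def atomOf (w : List (Fin P.N)) : Set ℝ :=
  w.foldl (fun A i => closure (P.f '' (A ∩ P.piece i))) P.X

/-- `𝒜_n`: the set of (nonempty) atoms of generation `n`. -/
def atoms (n : ℕ) : Set (Set ℝ) :=
  {A | ∃ w : List (Fin P.N), w.length = n ∧ P.atomOf w = A ∧ A.Nonempty}

/-- `θ` is the itinerary of `x`: `f^t(x) ∈ X_{θ_t}` for all `t`. -/
def IsItinerary (x : ℝ) (θ : ℕ → Fin P.N) : Prop :=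
  ∀ t : ℕ, P.f^[t] x ∈ P.piece (θ t)

/-- The word `θ_t θ_{t+1} … θ_{t+n-1}` of length `n` of the sequence `θ`. -/
def word (θ : ℕ → Fin P.N) (t n : ℕ) : List (Fin P.N) :=
  (List.range n).map fun k => θ (t + k)

/-- `L_n(θ)`: the set of words of length `n` occurring in `θ`. -/
def lang (θ : ℕ → Fin P.N) (n : ℕ) : Set (List (Fin P.N)) :=
  {w | ∃ t : ℕ, w = P.word θ t n}

/-- The complexity function `p_θ(n) = #L_n(θ)`. -/
noncomputable def complexity (θ : ℕ → Fin P.N) (n : ℕ) : ℕ := (P.lang θ n).ncard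

/-- The forward orbit of `x` under `f`. -/
def orbit (x : ℝ) : Set ℝ := {y | ∃ k : ℕ, P.f^[k] x = y}

/-- The ω-limit set of `x` under `f`. -/
def omegaLimitSet (x : ℝ) : Set ℝ :=
  ⋂ n : ℕ, closure {y | ∃ m : ℕ, n ≤ m ∧ P.f^[m] x = y}

/-- A compact pseudo-invariant set `A` is `X̃`-minimal if the orbit of every point
of `A ∩ X̃` is dense in `A`. -/
def XtildeMinimal (A : Set ℝ) : Prop :=
  IsCompact A ∧ P.PseudoInvariant A ∧ ∀ x ∈ A ∩ P.Xtilde, A ⊆ closure (P.orbit x)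

/-- A periodic orbit contained in `X̃`. -/
def IsPeriodicOrbit (A : Set ℝ) : Prop :=
  ∃ x ∈ P.Xtilde, ∃ p : ℕ, 1 ≤ p ∧ P.f^[p] x = x ∧ A = P.orbit x

end PCIM

/-- A Cantor set: nonempty, compact, perfect and totally disconnected. -/
def IsCantorSet (A : Set ℝ) : Prop :=
  A.Nonempty ∧ IsCompact A ∧ Perfect A ∧ IsTotallyDisconnected A


namespace PCIM

lemma piece_subset_X (P : PCIM) (i : Fin P.N) : P.piece i ⊆ P.X := by
  obtain ⟨c, d, hcd⟩ := P.piece_interval i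
  rw [hcd]; exact Set.inter_subset_right

lemma piece_ordConnected (P : PCIM) (i : Fin P.N) : (P.piece i).OrdConnected := by
  obtain ⟨c, d, hcd⟩ := P.piece_interval i
  rw [hcd]; exact Set.ordConnected_Ioo.inter Set.ordConnected_Icc

lemma atomOf_concat (P : PCIM) (w : List (Fin P.N)) (i : Fin P.N) :
    P.atomOf (w ++ [i]) = closure (P.f '' (P.atomOf w ∩ P.piece i)) := by
  simp [PCIM.atomOf, List.foldl_append]

lemma atomOf_subset_X (P : PCIM) (w : List (Fin P.N)) : P.atomOf w ⊆ P.X := by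
  rcases List.eq_nil_or_concat w with h | ⟨u, i, h⟩
  · subst h; exact le_refl _
  · rw [h, List.concat_eq_append, P.atomOf_concat]
    have h1 : P.f '' (P.atomOf u ∩ P.piece i) ⊆ P.X := by
      rintro y ⟨x, hx, rfl⟩
      exact P.mapsTo (P.piece_subset_X i hx.2)
    calc closure (P.f '' (P.atomOf u ∩ P.piece i)) ⊆ closure P.X := closure_mono h1
      _ = P.X := isClosed_Icc.closure_eq

lemma atomOf_isClosed (P : PCIM) (w : List (Fin P.N)) : IsClosed (P.atomOf w) := by
  rcases List.eq_nil_or_concat w with h | ⟨u, i, h⟩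
  · subst h; exact isClosed_Icc
  · rw [h, List.concat_eq_append, P.atomOf_concat]; exact isClosed_closure

lemma key_aux (P : PCIM) (i : Fin P.N)
    (hmi : StrictMonoOn P.f (P.piece i) ∨ StrictAntiOn P.f (P.piece i))
    {x y z : ℝ} (hxy : x < y) (p q : ℕ → ℝ)
    (hp : ∀ n, p n ∈ P.piece i) (hq : ∀ n, q n ∈ P.piece i)
    (hpx : Filter.Tendsto p Filter.atTop (𝓝 x))
    (hqy : Filter.Tendsto q Filter.atTop (𝓝 y))
    (hfp : Filter.Tendsto (fun n => P.f (p n)) Filter.atTop (𝓝 z))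
    (hfq : Filter.Tendsto (fun n => P.f (q n)) Filter.atTop (𝓝 z)) : False := by
  set m₁ := x + (y - x) / 3 with hm₁def
  set m₂ := x + 2 * (y - x) / 3 with hm₂def
  have hxm₁ : x < m₁ := by simp only [hm₁def]; linarith
  have hm₁m₂ : m₁ < m₂ := by simp only [hm₁def, hm₂def]; linarith
  have hm₂y : m₂ < y := by simp only [hm₂def]; linarith
  have hev₁ : ∀ᶠ n in Filter.atTop, p n < m₁ := hpx.eventually_lt_const hxm₁
  have hev₂ : ∀ᶠ n in Filter.atTop, m₂ < q n := hqy.eventually_const_lt hm₂y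
  obtain ⟨n₀, hn₁, hn₂⟩ := (hev₁.and hev₂).exists
  have hconn := P.piece_ordConnected i
  have hm₁mem : m₁ ∈ P.piece i := by
    exact hconn.out (hp n₀) (hq n₀) ⟨le_of_lt hn₁, by linarith⟩
  have hm₂mem : m₂ ∈ P.piece i := by
    exact hconn.out (hp n₀) (hq n₀) ⟨by linarith, le_of_lt hn₂⟩
  rcases hmi with hmono | hanti
  · have h1 : z ≤ P.f m₁ :=
      le_of_tendsto hfp (hev₁.mono fun n hn => (hmono (hp n) hm₁mem hn).le)
    have h2 : P.f m₂ ≤ z :=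
      ge_of_tendsto hfq (hev₂.mono fun n hn => (hmono hm₂mem (hq n) hn).le)
    have h3 : P.f m₁ < P.f m₂ := hmono hm₁mem hm₂mem hm₁m₂
    linarith
  · have h1 : P.f m₁ ≤ z :=
      ge_of_tendsto hfp (hev₁.mono fun n hn => (hanti (hp n) hm₁mem hn).le)
    have h2 : z ≤ P.f m₂ :=
      le_of_tendsto hfq (hev₂.mono fun n hn => (hanti hm₂mem (hq n) hn).le)
    have h3 : P.f m₂ < P.f m₁ := hanti hm₁mem hm₂mem hm₁m₂
    linarith

lemma key (P : PCIM) (hm : P.PiecewiseMonotonic) (i : Fin P.N)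
    {K₁ K₂ : Set ℝ} (h₁ : IsClosed K₁) (h₂ : IsClosed K₂)
    (hs₁ : K₁ ⊆ P.X) (hs₂ : K₂ ⊆ P.X) (hd : Disjoint K₁ K₂) :
    Disjoint (closure (P.f '' (K₁ ∩ P.piece i))) (closure (P.f '' (K₂ ∩ P.piece i))) := by
  rw [Set.disjoint_left]
  intro z hz₁ hz₂
  obtain ⟨u, hu, huz⟩ := mem_closure_iff_seq_limit.1 hz₁
  obtain ⟨v, hv, hvz⟩ := mem_closure_iff_seq_limit.1 hz₂
  choose p hp hfp using fun n => (Set.mem_image _ _ _).1 (hu n)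
  choose q hq hfq using fun n => (Set.mem_image _ _ _).1 (hv n)
  have hK₁c : IsCompact K₁ := isCompact_Icc.of_isClosed_subset h₁ hs₁
  have hK₂c : IsCompact K₂ := isCompact_Icc.of_isClosed_subset h₂ hs₂
  obtain ⟨x, hxK, φ, hφ, hpx⟩ := hK₁c.tendsto_subseq (fun n => (hp n).1)
  obtain ⟨y, hyK, ψ, hψ, hqy⟩ := hK₂c.tendsto_subseq (fun n => (hq (φ n)).1)
  have hpx' : Filter.Tendsto (fun n => p (φ (ψ n))) Filter.atTop (𝓝 x) :=
    hpx.comp hψ.tendsto_atTop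
  have hfpz : Filter.Tendsto (fun n => P.f (p (φ (ψ n)))) Filter.atTop (𝓝 z) := by
    have : (fun n => P.f (p (φ (ψ n)))) = (fun n => u (φ (ψ n))) := by
      funext n; exact hfp _
    rw [this]
    exact huz.comp (hφ.comp hψ).tendsto_atTop
  have hfqz : Filter.Tendsto (fun n => P.f (q (φ (ψ n)))) Filter.atTop (𝓝 z) := by
    have : (fun n => P.f (q (φ (ψ n)))) = (fun n => v (φ (ψ n))) := by
      funext n; exact hfq _
    rw [this]
    exact hvz.comp (hφ.comp hψ).tendsto_atTop
  have hxy : x ≠ y := fun h => Set.disjoint_left.1 hd hxK (h ▸ hyK)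
  rcases hxy.lt_or_gt with hlt | hlt
  · exact P.key_aux i (hm i) hlt _ _ (fun n => (hp (φ (ψ n))).2)
      (fun n => (hq (φ (ψ n))).2) hpx' hqy hfpz hfqz
  · exact P.key_aux i (hm i) hlt _ _ (fun n => (hq (φ (ψ n))).2)
      (fun n => (hp (φ (ψ n))).2) hqy hpx' hfqz hfpz

lemma atomOf_disjoint (P : PCIM) (hsep : P.SeparationProperty) :
    ∀ n : ℕ, ∀ w w' : List (Fin P.N), w.length = n → w'.length = n →
      w ≠ w' → Disjoint (P.atomOf w) (P.atomOf w') := by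
  intro n
  induction n with
  | zero =>
    intro w w' hw hw' hne
    exact absurd (by rw [List.length_eq_zero_iff.1 hw, List.length_eq_zero_iff.1 hw'])
      hne
  | succ n ih =>
    intro w w' hw hw' hne
    rcases List.eq_nil_or_concat w with h | ⟨u, i, h⟩
    · simp [h] at hw
    rcases List.eq_nil_or_concat w' with h' | ⟨v, j, h'⟩
    · simp [h'] at hw'
    subst h; subst h'
    simp only [List.concat_eq_append] at *
    have hu : u.length = n := by simpa using hw
    have hv : v.length = n := by simpa using hw'
    rw [P.atomOf_concat, P.atomOf_concat]
    by_cases hij : i = j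
    · subst hij
      have huv : u ≠ v := fun h => hne (by rw [h])
      exact P.key hsep.1 i (P.atomOf_isClosed u) (P.atomOf_isClosed v)
        (P.atomOf_subset_X u) (P.atomOf_subset_X v) (ih u v hu hv huv)
    · have hdisj : Disjoint (closure (P.f '' P.piece i)) (closure (P.f '' P.piece j)) :=
        Set.disjoint_iff_inter_eq_empty.2 (hsep.2 i j hij)
      exact hdisj.mono (closure_mono (Set.image_mono Set.inter_subset_right))
        (closure_mono (Set.image_mono Set.inter_subset_right))

end PCIM

/-- Under the separation property, an atom of generation `n ≥ 1`
determines its code: equal atoms have equal words. -/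
theorem atom_code_unique (P : PCIM) (hsep : P.SeparationProperty) :
    ∀ n : ℕ, 1 ≤ n → ∀ w w' : List (Fin P.N),
      w.length = n → w'.length = n →
      (P.atomOf w).Nonempty → (P.atomOf w').Nonempty →
      P.atomOf w = P.atomOf w' → w = w' := by
  intro n _ w w' hw hw' hne _ heq
  by_contra hww
  obtain ⟨x, hx⟩ := hne
  exact Set.disjoint_left.1 (P.atomOf_disjoint hsep n w w' hw hw' hww) hx (heq ▸ hx)
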